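/- Let Rad be an irreducible root system in a finite-dimensional real inner product space V, let v be a regular vector, and let B(v) be the corresponding base of simple roots. If H₁ and H₂ are nonzero vectors in the closed dual chamber {H ∈ V : (α, H) ≥ 0 for all α ∈ B(v)}, then (H₁, H₂) > 0. -/

import Mathlib

open scoped RealInnerProductSpace

namespace PaperRS

variable {V : Type*} [NormedAddCommGroup V] [InnerProductSpace ℝ V]

/-- The reflection in a root `α`. -/
noncomputable def reflRoot (α x : V) : V := x - (2 * ⟪x, α⟫ / ⟪α, α⟫) • α

/-- `Rad` is a (reduced, crystallographic) root system in `V`. -/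
structure IsRootSystem (Rad : Set V) : Prop where
  finite : Rad.Finite
  nonzero : ∀ α ∈ Rad, α ≠ 0
  spanning : Submodule.span ℝ Rad = ⊤
  integral : ∀ α ∈ Rad, ∀ β ∈ Rad, ∃ n : ℤ, 2 * ⟪β, α⟫ / ⟪α, α⟫ = (n : ℝ)
  reflMem : ∀ α ∈ Rad, ∀ β ∈ Rad, reflRoot α β ∈ Rad
  reduced : ∀ α ∈ Rad, ∀ c : ℝ, c • α ∈ Rad → c = 1 ∨ c = -1

/-- Irreducibility: `Rad` is not the union of two nonempty mutually orthogonal subsets. -/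
def IsIrreducible (Rad : Set V) : Prop :=
  ¬ ∃ R₁ R₂ : Set V, R₁.Nonempty ∧ R₂.Nonempty ∧ Rad = R₁ ∪ R₂ ∧
      ∀ α ∈ R₁, ∀ β ∈ R₂, ⟪α, β⟫ = 0

/-- An involution of the root system `Rad`: an orthogonal linear automorphism `t` of `V`
with `t(Rad) = Rad` and `t ∘ t = id`. -/
structure IsInvolution (Rad : Set V) (t : V ≃ₗᵢ[ℝ] V) : Prop where
  maps : (⇑t) '' Rad = Rad
  invol : ∀ x : V, t (t x) = x

/-- Two roots are strongly orthogonal if neither their sum nor their difference is a root. -/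
def StronglyOrthogonal (Rad : Set V) (α β : V) : Prop :=
  α ≠ β ∧ α ≠ -β ∧ α + β ∉ Rad ∧ α - β ∉ Rad

/-- A vector is regular for `Rad` if it is orthogonal to no root. -/
def IsRegular (Rad : Set V) (v : V) : Prop := ∀ α ∈ Rad, ⟪α, v⟫ ≠ 0

/-- The positive roots determined by a regular vector `v`. -/
def posRoots (Rad : Set V) (v : V) : Set V := {α ∈ Rad | 0 < ⟪α, v⟫}

/-- The base of simple roots determined by a regular vector `v`: the positive roots which
are not sums of two positive roots. -/
def simpleBase (Rad : Set V) (v : V) : Set V :=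
  {α ∈ posRoots Rad v | ¬ ∃ β ∈ posRoots Rad v, ∃ γ ∈ posRoots Rad v, α = β + γ}

/-- A regular vector `v` is an S-chamber vector for an involution `t` if
`(α,v)·(t α,v) > 0` for every complex root `α` (i.e. every root with `t α ≠ ±α`). -/
def IsSChamber (Rad : Set V) (t : V ≃ₗᵢ[ℝ] V) (v : V) : Prop :=
  IsRegular Rad v ∧
    ∀ α ∈ Rad, t α ≠ α → t α ≠ -α → 0 < ⟪α, v⟫ * ⟪t α, v⟫

/-- `P ⊆ Rad` is parabolic if `P ∪ (-P) = Rad` and `P` is closed under root addition. -/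
def IsParabolic (Rad P : Set V) : Prop :=
  P ⊆ Rad ∧ (∀ α ∈ Rad, α ∈ P ∨ -α ∈ P) ∧
    ∀ α ∈ P, ∀ β ∈ P, α + β ∈ Rad → α + β ∈ P

/-- Composition `s_{β 0} ∘ s_{β 1} ∘ ⋯ ∘ s_{β (r-1)}` of the reflections in the roots
`β 0, …, β (r-1)`. -/
noncomputable def reflComp : (r : ℕ) → (Fin r → V) → V → V
  | 0, _ => id
  | r + 1, β => reflRoot (β 0) ∘ reflComp r (fun i => β i.succ)

section Aux

variable {Rad : Set V} {v : V}

lemma rootSelfPos (hRS : IsRootSystem Rad) {α : V} (hα : α ∈ Rad) : (0:ℝ) < ⟪α, α⟫ :=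
  lt_of_le_of_ne real_inner_self_nonneg
    (fun h => hRS.nonzero α hα (inner_self_eq_zero.1 h.symm))

lemma negMem (hRS : IsRootSystem Rad) {α : V} (hα : α ∈ Rad) : -α ∈ Rad := by
  have h := hRS.reflMem α hα α hα
  have hne : (⟪α, α⟫ : ℝ) ≠ 0 := (rootSelfPos hRS hα).ne'
  have : reflRoot α α = -α := by
    simp only [reflRoot]
    rw [mul_div_assoc, div_self hne, mul_one, two_smul]
    abel
  rwa [this] at h

lemma posRoots_subset : posRoots Rad v ⊆ Rad := fun _ h => h.1

/-- Strong induction on the "height" `⟪α, v⟫` of positive roots. -/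
lemma posRoot_induction (hRS : IsRootSystem Rad) (motive : V → Prop)
    (ind : ∀ α ∈ posRoots Rad v,
      (∀ β ∈ posRoots Rad v, ⟪β, v⟫ < ⟪α, v⟫ → motive β) → motive α) :
    ∀ α ∈ posRoots Rad v, motive α := by
  classical
  have hfin : (posRoots Rad v).Finite := hRS.finite.subset posRoots_subset
  set Pf : Finset V := hfin.toFinset with hPf
  have hmemPf : ∀ {δ : V}, δ ∈ Pf ↔ δ ∈ posRoots Rad v := fun {δ} => hfin.mem_toFinset
  set m : V → ℕ := fun α => (Pf.filter (fun δ => ⟪δ, v⟫ < ⟪α, v⟫)).card with hm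
  have key : ∀ n : ℕ, ∀ α ∈ posRoots Rad v, m α = n → motive α := by
    intro n
    induction n using Nat.strong_induction_on with
    | _ n ih =>
      intro α hα hmα
      refine ind α hα (fun β hβ hlt => ?_)
      have hsub : Pf.filter (fun δ => ⟪δ, v⟫ < ⟪β, v⟫) ⊂
          Pf.filter (fun δ => ⟪δ, v⟫ < ⟪α, v⟫) := by
        refine Finset.ssubset_iff_of_subset ?_ |>.2 ?_
        · intro δ hδ
          rw [Finset.mem_filter] at hδ ⊢
          exact ⟨hδ.1, hδ.2.trans hlt⟩
        · exact ⟨β, Finset.mem_filter.2 ⟨hmemPf.2 hβ, hlt⟩,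
            fun hc => absurd (Finset.mem_filter.1 hc).2 (lt_irrefl _)⟩
      have : m β < n := hmα ▸ Finset.card_lt_card hsub
      exact ih (m β) this β hβ rfl
  exact fun α hα => key (m α) α hα rfl

lemma span_simpleBase (hRS : IsRootSystem Rad) (hreg : IsRegular Rad v) :
    Submodule.span ℝ (simpleBase Rad v) = ⊤ := by
  have hpos : ∀ α ∈ posRoots Rad v, α ∈ Submodule.span ℝ (simpleBase Rad v) := by
    refine posRoot_induction hRS _ (fun α hα ih => ?_)
    by_cases hs : α ∈ simpleBase Rad v
    · exact Submodule.subset_span hs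
    · have hdec : ∃ β ∈ posRoots Rad v, ∃ γ ∈ posRoots Rad v, α = β + γ := by
        by_contra hno
        exact hs ⟨hα, hno⟩
      obtain ⟨β, hβ, γ, hγ, hsum⟩ := hdec
      have hhv : ⟪α, v⟫ = ⟪β, v⟫ + ⟪γ, v⟫ := by rw [hsum, inner_add_left]
      have hβlt : ⟪β, v⟫ < ⟪α, v⟫ := by rw [hhv]; linarith [hγ.2]
      have hγlt : ⟪γ, v⟫ < ⟪α, v⟫ := by rw [hhv]; linarith [hβ.2]
      rw [hsum]
      exact Submodule.add_mem _ (ih β hβ hβlt) (ih γ hγ hγlt)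
  rw [eq_top_iff, ← hRS.spanning]
  refine Submodule.span_le.2 (fun α hα => ?_)
  rcases lt_or_gt_of_ne (hreg α hα) with hneg | hposi
  · have hnegmem : -α ∈ posRoots Rad v := by
      refine ⟨negMem hRS hα, ?_⟩
      rw [inner_neg_left]; linarith
    have := hpos _ hnegmem
    simpa using Submodule.neg_mem _ this
  · exact hpos α ⟨hα, hposi⟩

/-- Distinct simple roots have non-positive inner product. -/
lemma simple_obtuse (hRS : IsRootSystem Rad) (hreg : IsRegular Rad v)
    {α β : V} (hα : α ∈ simpleBase Rad v) (hβ : β ∈ simpleBase Rad v) (hne : α ≠ β) :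
    ⟪α, β⟫ ≤ 0 := by
  by_contra hpos
  push_neg at hpos
  have hαR : α ∈ Rad := hα.1.1
  have hβR : β ∈ Rad := hβ.1.1
  obtain ⟨n, hn⟩ := hRS.integral β hβR α hαR
  obtain ⟨m, hm⟩ := hRS.integral α hαR β hβR
  have hαself := rootSelfPos hRS hαR
  have hβself := rootSelfPos hRS hβR
  have hnorm_α : (0:ℝ) < ‖α‖ := norm_pos_iff.2 (hRS.nonzero α hαR)
  have hnorm_β : (0:ℝ) < ‖β‖ := norm_pos_iff.2 (hRS.nonzero β hβR)
  -- strict Cauchy–Schwarz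
  have hCS : ⟪α, β⟫ < ‖α‖ * ‖β‖ := by
    rw [inner_lt_norm_mul_iff_real]
    intro heq
    have hαeq : α = (‖α‖ / ‖β‖) • β := by
      have h2 : α = ‖β‖⁻¹ • (‖α‖ • β) := by
        rw [← heq, smul_smul, inv_mul_cancel₀ hnorm_β.ne', one_smul]
      rw [smul_smul, ← div_eq_inv_mul] at h2
      exact h2
    have hmem : (‖α‖ / ‖β‖) • β ∈ Rad := hαeq ▸ hαR
    rcases hRS.reduced β hβR _ hmem with h1 | h1
    · exact hne (by rw [hαeq, h1, one_smul])
    · have : (0:ℝ) < ‖α‖ / ‖β‖ := div_pos hnorm_α hnorm_β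
      rw [h1] at this; linarith
  -- n and m are positive integers with (n:ℝ)*(m:ℝ) < 4
  have hinner_sq : ⟪α, β⟫ * ⟪α, β⟫ < ⟪α, α⟫ * ⟪β, β⟫ := by
    have h1 : ⟪α, β⟫ * ⟪α, β⟫ < (‖α‖ * ‖β‖) * (‖α‖ * ‖β‖) := by
      exact mul_lt_mul'' hCS hCS hpos.le hpos.le
    calc ⟪α, β⟫ * ⟪α, β⟫ < (‖α‖ * ‖β‖) * (‖α‖ * ‖β‖) := h1
      _ = ⟪α, α⟫ * ⟪β, β⟫ := by
            rw [real_inner_self_eq_norm_mul_norm, real_inner_self_eq_norm_mul_norm]; ring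
  have hsymm : ⟪β, α⟫ = ⟪α, β⟫ := real_inner_comm α β
  have hnpos : (0:ℝ) < (n:ℝ) := by
    rw [← hn]; positivity
  have hmpos : (0:ℝ) < (m:ℝ) := by
    rw [← hm, hsymm]; positivity
  have hprod : (n:ℝ) * (m:ℝ) < 4 := by
    rw [← hn, ← hm, hsymm]
    rw [div_mul_div_comm]
    rw [div_lt_iff₀ (by positivity)]
    nlinarith [hinner_sq]
  have hn1 : (1:ℤ) ≤ n := by exact_mod_cast hnpos
  have hm1 : (1:ℤ) ≤ m := by exact_mod_cast hmpos
  have hnm : n * m < 4 := by exact_mod_cast (by push_cast; linarith : ((n*m : ℤ):ℝ) < 4)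
  have hcase : n = 1 ∨ m = 1 := by
    by_contra hcon
    push_neg at hcon
    have h2n : 2 ≤ n := lt_of_le_of_ne hn1 (Ne.symm hcon.1)
    have h2m : 2 ≤ m := lt_of_le_of_ne hm1 (Ne.symm hcon.2)
    nlinarith
  -- in either case α - β ∈ Rad
  have hδ : α - β ∈ Rad := by
    rcases hcase with h1 | h1
    · -- reflRoot β α = α - β
      have := hRS.reflMem β hβR α hαR
      rw [reflRoot, hn, h1] at this
      simpa using this
    · -- reflRoot α β = β - α, then negate
      have := hRS.reflMem α hαR β hβR
      rw [reflRoot, hm, h1] at this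
      simp only [Int.cast_one, one_smul] at this
      have := negMem hRS this
      simpa using this
  have hδ' : β - α ∈ Rad := by simpa using negMem hRS hδ
  rcases lt_or_gt_of_ne (hreg _ hδ) with hlt | hgt
  · -- β - α positive, β = (β - α) + α contradicts simplicity of β
    refine hβ.2 ⟨β - α, ⟨hδ', ?_⟩, α, hα.1, by abel⟩
    rw [inner_sub_left] at hlt ⊢
    linarith
  · refine hα.2 ⟨α - β, ⟨hδ, hgt⟩, β, hβ.1, by abel⟩

/-- Obtuse-cone lemma: a vector of the closed dual chamber is a non-negative combination. -/
lemma chamber_rep (Bf : Finset V) (hspan : Submodule.span ℝ (↑Bf : Set V) = ⊤)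
    (hobt : ∀ α ∈ Bf, ∀ β ∈ Bf, α ≠ β → ⟪α, β⟫ ≤ 0)
    (H : V) (hH : ∀ α ∈ Bf, 0 ≤ ⟪α, H⟫) :
    ∃ c : V → ℝ, (∀ α ∈ Bf, 0 ≤ c α) ∧ H = ∑ α ∈ Bf, c α • α := by
  classical
  have hmem : H ∈ Submodule.span ℝ (↑Bf : Set V) := by rw [hspan]; trivial
  obtain ⟨f, -, hf⟩ := Submodule.mem_span_finset.1 hmem
  set P : Finset V := Bf.filter (fun α => 0 ≤ f α) with hP
  set N : Finset V := Bf.filter (fun α => ¬ 0 ≤ f α) with hN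
  have hsplit : (∑ α ∈ P, f α • α) + (∑ α ∈ N, f α • α) = H := by
    rw [hP, hN, Finset.sum_filter_add_sum_filter_not]; exact hf
  set K : V := -(∑ α ∈ N, f α • α) with hK
  have hKeq : K = (∑ α ∈ P, f α • α) - H := by rw [hK, ← hsplit]; abel
  have hNneg : ∀ α ∈ N, f α < 0 := by
    intro α hα
    have := (Finset.mem_filter.1 hα).2
    linarith [lt_of_not_ge this]
  have hKH : 0 ≤ ⟪K, H⟫ := by
    have hexp : ⟪K, H⟫ = -∑ α ∈ N, f α * ⟪α, H⟫ := by
      simp [hK, inner_neg_left, sum_inner, real_inner_smul_left]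
    rw [hexp, neg_nonneg]
    refine Finset.sum_nonpos (fun α hα => ?_)
    exact mul_nonpos_of_nonpos_of_nonneg (hNneg α hα).le
      (hH α (Finset.mem_filter.1 hα).1)
  have hKP : ⟪K, ∑ β ∈ P, f β • β⟫ ≤ 0 := by
    have hexp : ⟪K, ∑ β ∈ P, f β • β⟫ = ∑ β ∈ P, f β * ⟪K, β⟫ := by
      rw [inner_sum]
      exact Finset.sum_congr rfl (fun β _ => real_inner_smul_right K β (f β))
    rw [hexp]
    refine Finset.sum_nonpos (fun β hβ => ?_)
    have hβP := Finset.mem_filter.1 hβ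
    refine mul_nonpos_of_nonneg_of_nonpos hβP.2 ?_
    have hexp2 : ⟪K, β⟫ = -∑ α ∈ N, f α * ⟪α, β⟫ := by
      simp [hK, inner_neg_left, sum_inner, real_inner_smul_left]
    rw [hexp2, neg_nonpos]
    refine Finset.sum_nonneg (fun α hα => ?_)
    have hαN := Finset.mem_filter.1 hα
    have hne : α ≠ β := by
      intro h; rw [h] at hαN; exact hαN.2 hβP.2
    have := mul_nonneg (neg_nonneg.2 (hNneg α hα).le)
      (neg_nonneg.2 (hobt α hαN.1 β hβP.1 hne))
    nlinarith [this]
  have hKself : ⟪K, K⟫ ≤ (0:ℝ) := by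
    have h1 : ⟪K, K⟫ = ⟪K, ∑ β ∈ P, f β • β⟫ - ⟪K, H⟫ := by
      rw [hKeq, inner_sub_right]
    linarith
  have hK0 : K = 0 := real_inner_self_nonpos.1 hKself
  have hN0 : (∑ α ∈ N, f α • α) = 0 := by
    have := hK0; rw [hK, neg_eq_zero] at this; exact this
  have hHP : H = ∑ α ∈ P, f α • α := by rw [← hsplit, hN0, add_zero]
  refine ⟨fun α => if 0 ≤ f α then f α else 0, ?_, ?_⟩
  · intro α _
    by_cases h : 0 ≤ f α <;> simp [h]
  · rw [hHP, hP, Finset.sum_filter]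
    exact Finset.sum_congr rfl (fun α _ => by simp only [ite_smul, zero_smul])

/-- If the simple base splits into two mutually orthogonal parts, every root lies in the
span of one of the parts. -/
lemma roots_split (hRS : IsRootSystem Rad) (hreg : IsRegular Rad v)
    {B₁ B₂ : Set V} (hU : B₁ ∪ B₂ = simpleBase Rad v)
    (hO : ∀ a ∈ B₁, ∀ b ∈ B₂, ⟪a, b⟫ = 0) :
    ∀ α ∈ Rad, α ∈ Submodule.span ℝ B₁ ∨ α ∈ Submodule.span ℝ B₂ := by
  set V₁ := Submodule.span ℝ B₁ with hV₁
  set V₂ := Submodule.span ℝ B₂ with hV₂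
  have hiso : V₁ ⟂ V₂ := Submodule.isOrtho_span.2 (fun u hu w hw => hO u hu w hw)
  have hOs : ∀ x ∈ V₁, ∀ y ∈ V₂, ⟪x, y⟫ = 0 :=
    fun x hx y hy => Submodule.isOrtho_iff_inner_eq.1 hiso x hx y hy
  have hdisj : ∀ x : V, x ∈ V₁ → x ∈ V₂ → x = 0 := fun x hx1 hx2 =>
    inner_self_eq_zero.1 (hOs x hx1 x hx2)
  have hpos : ∀ α ∈ posRoots Rad v, α ∈ V₁ ∨ α ∈ V₂ := by
    refine posRoot_induction hRS _ (fun α hα ih => ?_)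
    by_cases hs : α ∈ simpleBase Rad v
    · rw [← hU] at hs
      rcases hs with h | h
      · exact Or.inl (Submodule.subset_span h)
      · exact Or.inr (Submodule.subset_span h)
    · obtain ⟨β, hβ, γ, hγ, hsum⟩ : ∃ β ∈ posRoots Rad v, ∃ γ ∈ posRoots Rad v, α = β + γ := by
        by_contra hno; exact hs ⟨hα, hno⟩
      have hhv : ⟪α, v⟫ = ⟪β, v⟫ + ⟪γ, v⟫ := by rw [hsum, inner_add_left]
      have hβlt : ⟪β, v⟫ < ⟪α, v⟫ := by rw [hhv]; linarith [hγ.2]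
      have hγlt : ⟪γ, v⟫ < ⟪α, v⟫ := by rw [hhv]; linarith [hβ.2]
      have IHβ := ih β hβ hβlt
      have IHγ := ih γ hγ hγlt
      have mixed : ∀ β' γ', β' ∈ posRoots Rad v → γ' ∈ posRoots Rad v → α = β' + γ' →
          β' ∈ V₁ → γ' ∈ V₂ → False := by
        intro β' γ' hβ' hγ' hsum' hβV hγV
        have hβR : β' ∈ Rad := hβ'.1
        have hγR : γ' ∈ Rad := hγ'.1
        have hαR : α ∈ Rad := hα.1
        have horth : ⟪γ', β'⟫ = 0 := by
          rw [real_inner_comm]; exact hOs β' hβV γ' hγV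
        have hrefl := hRS.reflMem β' hβR α hαR
        have hcoeff : 2 * ⟪α, β'⟫ / ⟪β', β'⟫ = 2 := by
          rw [hsum', inner_add_left, horth, add_zero, mul_div_assoc,
            div_self (rootSelfPos hRS hβR).ne', mul_one]
        have hrr : reflRoot β' α = γ' - β' := by
          rw [reflRoot, hcoeff, hsum', two_smul]; abel
        rw [hrr] at hrefl
        have hβ0 : β' ≠ 0 := hRS.nonzero _ hβR
        have hγ0 : γ' ≠ 0 := hRS.nonzero _ hγR
        rcases lt_or_gt_of_ne (hreg _ hrefl) with hlt | hgt
        · have hmem : β' - γ' ∈ posRoots Rad v := by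
            refine ⟨by simpa using negMem hRS hrefl, ?_⟩
            rw [inner_sub_left]
            rw [inner_sub_left] at hlt
            linarith
          have hht : ⟪β' - γ', v⟫ < ⟪α, v⟫ := by
            rw [inner_sub_left, hsum', inner_add_left]
            linarith [hγ'.2]
          rcases ih _ hmem hht with h | h
          · exact hγ0 (hdisj γ'
              (by have := Submodule.sub_mem V₁ hβV h; simpa using this) hγV)
          · exact hβ0 (hdisj β' hβV
              (by have := Submodule.add_mem V₂ h hγV; simpa using this))
        · have hmem : γ' - β' ∈ posRoots Rad v := ⟨hrefl, hgt⟩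
          have hht : ⟪γ' - β', v⟫ < ⟪α, v⟫ := by
            rw [inner_sub_left, hsum', inner_add_left]
            linarith [hβ'.2]
          rcases ih _ hmem hht with h | h
          · exact hγ0 (hdisj γ'
              (by have := Submodule.add_mem V₁ h hβV; simpa using this) hγV)
          · exact hβ0 (hdisj β' hβV
              (by have := Submodule.sub_mem V₂ hγV h; simpa using this))
      rcases IHβ with h1 | h1 <;> rcases IHγ with h2 | h2
      · exact Or.inl (hsum ▸ Submodule.add_mem V₁ h1 h2)
      · exact (mixed β γ hβ hγ hsum h1 h2).elim
      · exact (mixed γ β hγ hβ (by rw [hsum]; abel) h2 h1).elim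
      · exact Or.inr (hsum ▸ Submodule.add_mem V₂ h1 h2)
  intro α hα
  rcases lt_or_gt_of_ne (hreg α hα) with hneg | hposi
  · have hnegmem : -α ∈ posRoots Rad v := by
      refine ⟨negMem hRS hα, ?_⟩
      rw [inner_neg_left]; linarith
    rcases hpos _ hnegmem with h | h
    · exact Or.inl (by simpa using Submodule.neg_mem V₁ h)
    · exact Or.inr (by simpa using Submodule.neg_mem V₂ h)
  · exact hpos α ⟨hα, hposi⟩

end Aux

/-- in an irreducible root system, two nonzero vectors of the closed dual
chamber have positive inner product. -/
theorem stmt14 {V : Type*} [NormedAddCommGroup V] [InnerProductSpace ℝ V]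
    [FiniteDimensional ℝ V] (Rad : Set V) (hRS : IsRootSystem Rad)
    (hirr : IsIrreducible Rad) (v : V) (hreg : IsRegular Rad v)
    (H₁ H₂ : V) (h₁ : H₁ ≠ 0) (h₂ : H₂ ≠ 0)
    (hc₁ : ∀ α ∈ simpleBase Rad v, 0 ≤ ⟪α, H₁⟫)
    (hc₂ : ∀ α ∈ simpleBase Rad v, 0 ≤ ⟪α, H₂⟫) :
    0 < ⟪H₁, H₂⟫ := by
  classical
  have hBsub : simpleBase Rad v ⊆ Rad := fun α hα => hα.1.1
  have hBfin : (simpleBase Rad v).Finite := hRS.finite.subset hBsub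
  set Bf : Finset V := hBfin.toFinset with hBfdef
  have hmemBf : ∀ {δ : V}, δ ∈ Bf ↔ δ ∈ simpleBase Rad v := fun {δ} => hBfin.mem_toFinset
  have hcoe : (↑Bf : Set V) = simpleBase Rad v := hBfin.coe_toFinset
  have hspan : Submodule.span ℝ (↑Bf : Set V) = ⊤ := by
    rw [hcoe]; exact span_simpleBase hRS hreg
  have hobt : ∀ α ∈ Bf, ∀ β ∈ Bf, α ≠ β → ⟪α, β⟫ ≤ 0 := fun α hα β hβ hne =>
    simple_obtuse hRS hreg (hmemBf.1 hα) (hmemBf.1 hβ) hne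
  obtain ⟨c, hc0, hcrep⟩ := chamber_rep Bf hspan hobt H₂ (fun α hα => hc₂ α (hmemBf.1 hα))
  obtain ⟨d, hd0, hdrep⟩ := chamber_rep Bf hspan hobt H₁ (fun α hα => hc₁ α (hmemBf.1 hα))
  have hIP : ⟪H₁, H₂⟫ = ∑ α ∈ Bf, c α * ⟪α, H₁⟫ := by
    conv_lhs => rw [hcrep]
    rw [inner_sum]
    exact Finset.sum_congr rfl fun α _ => by
      rw [real_inner_smul_right, real_inner_comm]
  have hterms : ∀ α ∈ Bf, 0 ≤ c α * ⟪α, H₁⟫ := fun α hα =>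
    mul_nonneg (hc0 α hα) (hc₁ α (hmemBf.1 hα))
  rcases lt_or_eq_of_le (Finset.sum_nonneg hterms) with h | h
  · rw [hIP]; exact h
  · exfalso
    have hzero : ∀ α ∈ Bf, c α * ⟪α, H₁⟫ = 0 :=
      (Finset.sum_eq_zero_iff_of_nonneg hterms).1 h.symm
    set T : Finset V := Bf.filter (fun α => 0 < c α) with hT
    have hTne : T.Nonempty := by
      by_contra hemp
      rw [Finset.not_nonempty_iff_eq_empty] at hemp
      apply h₂
      rw [hcrep]
      refine Finset.sum_eq_zero (fun α hα => ?_)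
      have hnlt : ¬ 0 < c α := by
        intro hlt
        have hmem : α ∈ T := Finset.mem_filter.2 ⟨hα, hlt⟩
        rw [hemp] at hmem
        exact absurd hmem (Finset.notMem_empty α)
      have hc : c α = 0 := le_antisymm (not_lt.1 hnlt) (hc0 α hα)
      rw [hc, zero_smul]
    have hCne : (Bf \ T).Nonempty := by
      by_contra hemp
      rw [Finset.not_nonempty_iff_eq_empty, Finset.sdiff_eq_empty_iff_subset] at hemp
      have hallzero : ∀ α ∈ Bf, ⟪α, H₁⟫ = 0 := by
        intro α hα
        have hcα : 0 < c α := (Finset.mem_filter.1 (hemp hα)).2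
        rcases mul_eq_zero.1 (hzero α hα) with h' | h'
        · exact absurd h' hcα.ne'
        · exact h'
      apply h₁
      have hzz : ⟪H₁, H₁⟫ = 0 := by
        nth_rewrite 2 [hdrep]
        rw [inner_sum]
        refine Finset.sum_eq_zero (fun α hα => ?_)
        rw [real_inner_smul_right, real_inner_comm, hallzero α hα, mul_zero]
      exact inner_self_eq_zero.1 hzz
    have horthTB : ∀ β ∈ Bf, β ∉ T → ∀ α ∈ T, ⟪β, α⟫ = 0 := by
      intro β hβ hβT
      have hcβ : c β = 0 := by
        have hnlt : ¬ 0 < c β := fun hlt => hβT (Finset.mem_filter.2 ⟨hβ, hlt⟩)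
        exact le_antisymm (not_lt.1 hnlt) (hc0 β hβ)
      have hβH : ⟪β, H₂⟫ = ∑ α ∈ Bf, c α * ⟪β, α⟫ := by
        conv_lhs => rw [hcrep]
        rw [inner_sum]
        exact Finset.sum_congr rfl fun α _ => real_inner_smul_right β α (c α)
      have htermsnp : ∀ α ∈ Bf, c α * ⟪β, α⟫ ≤ 0 := by
        intro α hα
        by_cases hαT : 0 < c α
        · have hne : β ≠ α := by
            intro hbe
            rw [← hbe, hcβ] at hαT
            exact lt_irrefl 0 hαT
          exact mul_nonpos_of_nonneg_of_nonpos hαT.le (hobt β hβ α hα hne)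
        · have hcz : c α = 0 := le_antisymm (not_lt.1 hαT) (hc0 α hα)
          rw [hcz, zero_mul]
      have hsumnp : ∑ α ∈ Bf, c α * ⟪β, α⟫ = 0 :=
        le_antisymm (Finset.sum_nonpos htermsnp)
          (by rw [← hβH]; exact hc₂ β (hmemBf.1 hβ))
      have hall := (Finset.sum_eq_zero_iff_of_nonpos htermsnp).1 hsumnp
      intro α hαT
      have hαBf := (Finset.mem_filter.1 hαT).1
      have hcα := (Finset.mem_filter.1 hαT).2
      rcases mul_eq_zero.1 (hall α hαBf) with h' | h'
      · exact absurd h' hcα.ne'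
      · exact h'
    have hU : (↑T : Set V) ∪ (↑(Bf \ T) : Set V) = simpleBase Rad v := by
      rw [← hcoe]
      ext x
      simp only [Set.mem_union, Finset.coe_sdiff, Set.mem_diff, Finset.mem_coe]
      constructor
      · rintro (hx | hx)
        · exact (Finset.mem_filter.1 hx).1
        · exact hx.1
      · intro hx
        by_cases hxT : x ∈ T
        · exact Or.inl hxT
        · exact Or.inr ⟨hx, hxT⟩
    have hO : ∀ a ∈ (↑T : Set V), ∀ b ∈ (↑(Bf \ T) : Set V), ⟪a, b⟫ = 0 := by
      intro a ha b hb
      have hb' := Finset.mem_sdiff.1 (Finset.mem_coe.1 hb)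
      rw [real_inner_comm]
      exact horthTB b hb'.1 hb'.2 a (Finset.mem_coe.1 ha)
    have hsplit := roots_split hRS hreg hU hO
    have hiso : Submodule.span ℝ (↑T : Set V) ⟂ Submodule.span ℝ (↑(Bf \ T) : Set V) :=
      Submodule.isOrtho_span.2 (fun u hu w hw => hO u hu w hw)
    refine hirr ⟨Rad ∩ (Submodule.span ℝ (↑T : Set V) : Set V),
      Rad ∩ (Submodule.span ℝ (↑(Bf \ T) : Set V) : Set V), ?_, ?_, ?_, ?_⟩
    · obtain ⟨a, ha⟩ := hTne
      exact ⟨a, hBsub (hmemBf.1 (Finset.mem_filter.1 ha).1),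
        Submodule.subset_span (Finset.mem_coe.2 ha)⟩
    · obtain ⟨b, hb⟩ := hCne
      exact ⟨b, hBsub (hmemBf.1 (Finset.mem_sdiff.1 hb).1),
        Submodule.subset_span (Finset.mem_coe.2 hb)⟩
    · ext x
      constructor
      · intro hx
        rcases hsplit x hx with h' | h'
        · exact Or.inl ⟨hx, h'⟩
        · exact Or.inr ⟨hx, h'⟩
      · rintro (⟨h', _⟩ | ⟨h', _⟩) <;> exact h'
    · intro a ha b hb
      exact Submodule.isOrtho_iff_inner_eq.1 hiso a ha.2 b hb.2

end PaperRS
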